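/- Let v(a) ∈ ℝ² be a unit vector, and let η : I → ℝ² be a family of vectors of the form η(s) = v(s) - c(s)·v(a) with ‖v(s)‖ = 1 and |c(s)| ≤ 1, all lying on a common line 𝓛 through the origin that is not perpendicular to v(a) and not parallel to v(a). If the vectors v(s), s ∈ I, fill out a closed half of the unit circle (i.e., for every unit vector u with ⟨u, v(a)^⊥⟩ ≥ 0 there is s with v(s) = u), then there exists s ∈ I with dist(v(s), 𝓛) > 1, contradicting dist(v(s), η(s)) = |c(s)| ≤ 1. Hence 𝓛 must be perpendicular to v(a). -/

import Mathlib

open RealInnerProductSpace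

private theorem rowcol (a0 a1 b0 b1 : ℝ) (h1 : a0^2+a1^2=1) (h2 : b0^2+b1^2=1)
    (h3 : a0*b0+a1*b1=0) :
    a0^2+b0^2=1 ∧ a1^2+b1^2=1 ∧ a0*a1+b0*b1=0 := by
  set D := a0*b1 - a1*b0 with hD
  have hD2 : D^2 = 1 := by rw [hD]; nlinarith [h1, h2, h3]
  have hb0 : b0 = -D*a1 := by rw [hD]; linear_combination a0*h3 - b0*h1
  have hb1 : b1 = D*a0 := by rw [hD]; linear_combination a1*h3 - b1*h1
  refine ⟨by linear_combination (b0 - D*a1)*hb0 + a1^2*hD2 + h1,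
    by linear_combination (b1 + D*a0)*hb1 + a0^2*hD2 + h1,
    by linear_combination b1*hb0 + (-D*a1)*hb1 - a0*a1*hD2⟩

/-- if the unit vectors `v s` fill a closed half of the unit circle and
each `η s = v s - c s • v(a)` (with `|c s| ≤ 1`) lies on a common line `𝓛 = span{d}`
through the origin not parallel to the unit vector `v(a)`, then `𝓛` must be
perpendicular to `v(a)`. -/
theorem stmt_9 (I : Set ℝ) (va wa : EuclideanSpace ℝ (Fin 2))
    (hva : ‖va‖ = 1) (hwa : ‖wa‖ = 1) (hperp : ⟪va, wa⟫ = 0)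
    (d : EuclideanSpace ℝ (Fin 2)) (hd : d ≠ 0)
    (hnotpar : ¬ ∃ c : ℝ, d = c • va)
    (v : ℝ → EuclideanSpace ℝ (Fin 2)) (c : ℝ → ℝ)
    (hv : ∀ s ∈ I, ‖v s‖ = 1) (hc : ∀ s ∈ I, |c s| ≤ 1)
    (hη : ∀ s ∈ I, v s - c s • va ∈ Submodule.span ℝ ({d} : Set (EuclideanSpace ℝ (Fin 2))))
    (hfill : ∀ u : EuclideanSpace ℝ (Fin 2), ‖u‖ = 1 → 0 ≤ ⟪u, wa⟫ →
      ∃ s ∈ I, v s = u) :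
    ⟪d, va⟫ = 0 := by
  have hva2 : ⟪va, va⟫ = (1:ℝ) := by
    rw [real_inner_self_eq_norm_sq, hva]; norm_num
  have hwa2 : ⟪wa, wa⟫ = (1:ℝ) := by
    rw [real_inner_self_eq_norm_sq, hwa]; norm_num
  have hperp' : ⟪wa, va⟫ = 0 := by rw [real_inner_comm]; exact hperp
  have hinner : ∀ x y : EuclideanSpace ℝ (Fin 2), ⟪x, y⟫ = x 0 * y 0 + x 1 * y 1 := by
    intro x y
    simp [PiLp.inner_apply, Fin.sum_univ_two, mul_comm]
  set α : ℝ := ⟪va, d⟫ with hα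
  set β : ℝ := ⟪wa, d⟫ with hβ
  -- coordinate facts
  have h1 : (va 0)^2 + (va 1)^2 = 1 := by
    have h := hva2; rw [hinner] at h; nlinarith [h]
  have h2 : (wa 0)^2 + (wa 1)^2 = 1 := by
    have h := hwa2; rw [hinner] at h; nlinarith [h]
  have h3 : va 0 * wa 0 + va 1 * wa 1 = 0 := by
    have h := hperp; rw [hinner] at h; linarith [h]
  obtain ⟨hc0, hc1, hc2⟩ := rowcol (va 0) (va 1) (wa 0) (wa 1) h1 h2 h3
  -- decomposition of d
  have hdec : ∀ i, d i = α * va i + β * wa i := by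
    intro i
    have hαc : α = va 0 * d 0 + va 1 * d 1 := by rw [hα, hinner]
    have hβc : β = wa 0 * d 0 + wa 1 * d 1 := by rw [hβ, hinner]
    fin_cases i
    · show d 0 = α * va 0 + β * wa 0
      rw [hαc, hβc]; linear_combination (-(d 0)) * hc0 + (-(d 1)) * hc2
    · show d 1 = α * va 1 + β * wa 1
      rw [hαc, hβc]; linear_combination (-(d 1)) * hc1 + (-(d 0)) * hc2
  -- key fact for unit u in the closed half circle
  have key : ∀ u : EuclideanSpace ℝ (Fin 2), ‖u‖ = 1 → 0 ≤ ⟪u, wa⟫ →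
      ∃ t cc : ℝ, |cc| ≤ 1 ∧ ⟪va, u⟫ - cc = t * α ∧ ⟪wa, u⟫ = t * β := by
    intro u hu hu2
    obtain ⟨s, hsI, hsu⟩ := hfill u hu hu2
    obtain ⟨t, ht⟩ := Submodule.mem_span_singleton.mp (hη s hsI)
    refine ⟨t, c s, hc s hsI, ?_, ?_⟩
    · have h := congrArg (fun x => ⟪va, x⟫) ht
      simp only [real_inner_smul_right, inner_sub_right, hsu, hva2] at h
      rw [← hα] at h; linarith [h]
    · have h := congrArg (fun x => ⟪wa, x⟫) ht
      simp only [real_inner_smul_right, inner_sub_right, hsu, hperp'] at h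
      rw [← hβ] at h; linarith [h]
  -- β ≠ 0
  have hβne : β ≠ 0 := by
    intro hβ0
    apply hnotpar
    refine ⟨α, ?_⟩
    ext i
    have h := hdec i
    rw [hβ0, zero_mul, add_zero] at h
    simpa using h
  -- suppose α ≠ 0
  rw [real_inner_comm, ← hα]
  by_contra hαne
  set r : ℝ := α / β with hr
  have hαr : α = r * β := by rw [hr, div_mul_cancel₀ _ hβne]
  have hrne : r ≠ 0 := by
    intro h; apply hαne; rw [hαr, h, zero_mul]
  set N : ℝ := Real.sqrt (1 + r^2) with hN
  have hN2 : N^2 = 1 + r^2 := Real.sq_sqrt (by positivity)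
  have hNpos : 0 < N := Real.sqrt_pos.mpr (by positivity)
  have hNne : N ≠ 0 := ne_of_gt hNpos
  have hr2 : 0 < r^2 := by positivity
  have hN1 : 1 < N := by nlinarith [hr2, hNpos, hN2]
  set s0 : ℝ := if 0 < r then 1 else -1 with hs0
  have hs2 : s0^2 = 1 := by rw [hs0]; split <;> norm_num
  have hsr : s0 * r = |r| := by
    rw [hs0]; split
    · rw [abs_of_pos ‹_›]; ring
    · rw [abs_of_neg (lt_of_le_of_ne (not_lt.mp ‹_›) hrne)]; ring
  set u : EuclideanSpace ℝ (Fin 2) := (-s0/N) • va + (|r|/N) • wa with hu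
  have hiva : ⟪va, u⟫ = -s0/N := by
    rw [hu, inner_add_right, real_inner_smul_right, real_inner_smul_right, hva2, hperp]; ring
  have hiwa : ⟪wa, u⟫ = |r|/N := by
    rw [hu, inner_add_right, real_inner_smul_right, real_inner_smul_right, hperp', hwa2]; ring
  have hunorm : ‖u‖ = 1 := by
    have e : (-s0/N)^2 + (|r|/N)^2 = 1 := by
      rw [div_pow, div_pow, ← add_div, neg_sq, hs2, sq_abs, ← hN2]
      simp [div_self (pow_ne_zero 2 hNne)]
    have huu : ⟪u, u⟫ = (1:ℝ) := by
      rw [hu]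
      simp only [inner_add_add_self, real_inner_smul_left, real_inner_smul_right,
        hva2, hwa2, hperp, hperp']
      linear_combination e
    have h := real_inner_self_eq_norm_sq u
    rw [huu] at h
    have h9 : (‖u‖ - 1) * (‖u‖ + 1) = 0 := by linear_combination -h
    rcases mul_eq_zero.mp h9 with h10 | h10
    · exact sub_eq_zero.mp h10
    · have h11 := norm_nonneg u
      rw [eq_neg_of_add_eq_zero_left h10] at h11
      norm_num at h11
  have huwa : 0 ≤ ⟪u, wa⟫ := by
    rw [real_inner_comm, hiwa]; positivity
  obtain ⟨t, cc, hcc1, he1, he2⟩ := key u hunorm huwa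
  rw [hiva] at he1
  rw [hiwa] at he2
  have htN : t * β * N = |r| := (eq_div_iff hNne).mp he2.symm
  have hccval : cc = -s0 * N := by
    have h' : cc = -s0/N - t*α := by linarith [he1]
    have e : cc * N = -s0 - t*α*N := by
      rw [h', sub_mul, div_mul_cancel₀ _ hNne]
    have e2 : t * α * N = |r| * r := by
      rw [hαr]
      calc t * (r * β) * N = (t * β * N) * r := by ring
        _ = |r| * r := by rw [htN]
    have e3 : cc * N = (-s0 * N) * N := by
      rw [e, e2, ← hsr]
      linear_combination s0 * hN2
    exact mul_right_cancel₀ hNne e3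
  have habs : |cc| = N := by
    rw [hccval, abs_mul, abs_neg]
    have hs1 : |s0| = 1 := by rw [hs0]; split <;> norm_num
    rw [hs1, abs_of_pos hNpos, one_mul]
  rw [habs] at hcc1
  linarith
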